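/- Let H be a real Hilbert space, let A and B be bounded linear operators on H, let T > 0, let x₀ ∈ H, and let u : [0,T] → H be Bochner integrable. Define x : [0,T] → H by x_t = exp(tA) x₀ + ∫₀^t exp((t−s)A) B u_s ds. Then x is continuous, x_0 = x₀, and x satisfies the mild-solution identity x_t = exp((t−a)A) x_a + ∫_a^t exp((t−s)A) B u_s ds for all 0 ≤ a ≤ t ≤ T; moreover, any continuous y : [0,T] → H with y_0 = x₀ satisfying this identity for all 0 ≤ a ≤ t ≤ T equals x. (Existence and uniqueness of the mild solution of ẋ_t = A x_t + B u_t.) -/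

import Mathlib

open MeasureTheory NormedSpace

set_option maxHeartbeats 1000000
set_option synthInstance.maxHeartbeats 400000

/-- Existence and uniqueness of the mild solution of `ẋ_t = A x_t + B u_t` on `[0, T]`
for bounded operators `A, B` on a real Hilbert space `H`. -/
theorem mild_solution_exists_unique
    {H : Type*} [NormedAddCommGroup H] [InnerProductSpace ℝ H] [CompleteSpace H]
    (A B : H →L[ℝ] H) (T : ℝ) (hT : 0 < T) (x₀ : H) (u : ℝ → H)
    (hu : IntegrableOn u (Set.Icc 0 T))
    (x : ℝ → H)
    (hx : ∀ t, x t = exp (t • A) x₀ + ∫ s in (0:ℝ)..t, exp ((t - s) • A) (B (u s))) :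
    ContinuousOn x (Set.Icc 0 T) ∧ x 0 = x₀ ∧
      (∀ a t : ℝ, 0 ≤ a → a ≤ t → t ≤ T →
        x t = exp ((t - a) • A) (x a) + ∫ s in a..t, exp ((t - s) • A) (B (u s))) ∧
      (∀ y : ℝ → H, ContinuousOn y (Set.Icc 0 T) → y 0 = x₀ →
        (∀ a t : ℝ, 0 ≤ a → a ≤ t → t ≤ T →
          y t = exp ((t - a) • A) (y a) + ∫ s in a..t, exp ((t - s) • A) (B (u s))) →
        ∀ t ∈ Set.Icc (0:ℝ) T, y t = x t) := by
  classical
  letI : NormedAlgebra ℚ (H →L[ℝ] H) := .restrictScalars ℚ ℝ (H →L[ℝ] H)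
  set g : ℝ → H := fun s => exp ((-s) • A) (B (u s)) with hg_def
  -- exp additivity for commuting scalar multiples of A
  have hexp_add : ∀ a b : ℝ, exp ((a + b) • A) = exp (a • A) * exp (b • A) := by
    intro a b
    rw [add_smul]
    exact exp_add_of_commute (((Commute.refl A).smul_left a).smul_right b)
  -- continuity of s ↦ exp (s • A)
  have hexpc : Continuous fun s : ℝ => exp (s • A) :=
    exp_continuous.comp (continuous_id.smul continuous_const)
  -- measurability of g on [0, T]
  have hmeas : AEStronglyMeasurable g (volume.restrict (Set.Icc (0:ℝ) T)) := by
    have h1 : Continuous fun s : ℝ => exp ((-s) • A) :=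
      hexpc.comp continuous_neg
    have h2 : AEStronglyMeasurable (fun s => B (u s)) (volume.restrict (Set.Icc (0:ℝ) T)) :=
      B.continuous.comp_aestronglyMeasurable hu.1
    exact isBoundedBilinearMap_apply.continuous.comp_aestronglyMeasurable
      (h1.aestronglyMeasurable.prodMk h2)
  -- a bound for the operator norm on the compact interval
  obtain ⟨C, hC⟩ : ∃ C : ℝ, ∀ s ∈ Set.Icc (0:ℝ) T, ‖exp ((-s) • A)‖ ≤ C := by
    obtain ⟨C, hC⟩ := isCompact_Icc.exists_bound_of_continuousOn
      ((hexpc.comp continuous_neg).continuousOn (s := Set.Icc (0:ℝ) T))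
    exact ⟨C, hC⟩
  -- integrability of g on [0, T]
  have hg : IntegrableOn g (Set.Icc (0:ℝ) T) := by
    refine Integrable.mono' ((hu.norm.const_mul (C * ‖B‖))) hmeas ?_
    refine (ae_restrict_iff' measurableSet_Icc).2 (Filter.Eventually.of_forall ?_)
    intro s hs
    calc ‖g s‖ ≤ ‖exp ((-s) • A)‖ * ‖B (u s)‖ :=
          ContinuousLinearMap.le_opNorm _ _
      _ ≤ C * (‖B‖ * ‖u s‖) := by
          refine mul_le_mul (hC s hs) (B.le_opNorm _) (norm_nonneg _) ?_
          exact le_trans (norm_nonneg _) (hC s hs)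
      _ = C * ‖B‖ * ‖u s‖ := by ring
  have hgint : ∀ a t : ℝ, 0 ≤ a → a ≤ t → t ≤ T → IntervalIntegrable g volume a t := by
    intro a t ha hat htT
    have : IntegrableOn g (Set.Icc a t) :=
      hg.mono_set (Set.Icc_subset_Icc ha htT)
    exact (Set.uIcc_of_le hat ▸ this).intervalIntegrable
  -- key rewriting of the forcing integral
  have hint_eq : ∀ a t : ℝ, 0 ≤ a → a ≤ t → t ≤ T →
      (∫ s in a..t, exp ((t - s) • A) (B (u s))) = exp (t • A) (∫ s in a..t, g s) := by
    intro a t ha hat htT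
    rw [← (exp (t • A)).intervalIntegral_comp_comm (hgint a t ha hat htT)]
    refine intervalIntegral.integral_congr fun s _ => ?_
    have : exp ((t - s) • A) = exp (t • A) * exp ((-s) • A) := by
      rw [← hexp_add]; ring_nf
    rw [this]
    rfl
  -- the primitive
  set w : ℝ → H := fun t => x₀ + ∫ s in (0:ℝ)..t, g s with hw_def
  have hx' : ∀ t : ℝ, 0 ≤ t → t ≤ T → x t = exp (t • A) (w t) := by
    intro t ht htT
    rw [hx t, hw_def]
    simp only [map_add]
    rw [hint_eq 0 t le_rfl ht htT]
  -- continuity of x on [0, T]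
  have hwc : ContinuousOn w (Set.Icc 0 T) := by
    have : ContinuousOn (fun t => ∫ s in (0:ℝ)..t, g s) (Set.Icc 0 T) := by
      have := intervalIntegral.continuousOn_primitive_interval
        (a := (0:ℝ)) (b := T) (μ := volume) (f := g)
        (by rwa [Set.uIcc_of_le hT.le])
      rwa [Set.uIcc_of_le hT.le] at this
    exact continuousOn_const.add this
  have hxc : ContinuousOn x (Set.Icc 0 T) := by
    have h : ContinuousOn (fun t => exp (t • A) (w t)) (Set.Icc 0 T) :=
      ContinuousOn.clm_apply hexpc.continuousOn hwc
    exact h.congr fun t ht => hx' t ht.1 ht.2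
  -- initial condition
  have hx0 : x 0 = x₀ := by
    rw [hx 0]
    simp [zero_smul, exp_zero]
  -- the semigroup / mild solution identity
  have hmild : ∀ a t : ℝ, 0 ≤ a → a ≤ t → t ≤ T →
      x t = exp ((t - a) • A) (x a) + ∫ s in a..t, exp ((t - s) • A) (B (u s)) := by
    intro a t ha hat htT
    have haT : a ≤ T := hat.trans htT
    rw [hx' t (ha.trans hat) htT, hx' a ha haT, hint_eq a t ha hat htT]
    have h1 : exp ((t - a) • A) (exp (a • A) (w a)) = exp (t • A) (w a) := by
      have : exp ((t - a) • A) * exp (a • A) = exp (t • A) := by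
        rw [← hexp_add]; ring_nf
      rw [← this]; rfl
    rw [h1, ← map_add]
    congr 1
    rw [hw_def]
    simp only [add_assoc]
    congr 1
    exact (intervalIntegral.integral_add_adjacent_intervals
      (hgint 0 a le_rfl ha haT) (hgint a t ha hat htT)).symm
  refine ⟨hxc, hx0, hmild, ?_⟩
  intro y _ hy0 hy t ht
  have := hy 0 t le_rfl ht.1 ht.2
  rw [hy0, sub_zero] at this
  rw [this, hx t]
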